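/- Let n ≥ 1 and let V be a Lie subalgebra of the elementary filiform Lie algebra f_{n+2} that is not abelian. Then there exist an index i with 2 ≤ i ≤ n+1 and an element t₁ in the linear span of e₂, …, e_{i−1} (with t₁ = 0 when i = 2) such that V equals the linear span of {e₁ + t₁, e_i, e_{i+1}, …, e_{n+2}}. -/

import Mathlib

set_option maxHeartbeats 4000000 in
theorem stmt0
    (n : ℕ) (hn : 1 ≤ n)
    (L : Type) [LieRing L] [LieAlgebra ℝ L]
    (e : Fin (n + 2) → L)
    (hindep : LinearIndependent ℝ e)
    (hspan : Submodule.span ℝ (Set.range e) = ⊤)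
    (hbr : ∀ j : Fin (n + 2), ∀ _h1 : 1 ≤ (j : ℕ), ∀ _h2 : (j : ℕ) ≤ n,
      ⁅e 0, e j⁆ = ((n + 1 - (j : ℕ) : ℕ) : ℝ) • e ⟨(j : ℕ) + 1, by omega⟩)
    (hlast : ⁅e 0, e ⟨n + 1, by omega⟩⁆ = 0)
    (hzero : ∀ i j : Fin (n + 2), (i : ℕ) ≠ 0 → (j : ℕ) ≠ 0 → ⁅e i, e j⁆ = 0)
    (V : LieSubalgebra ℝ L)
    (hV : ∃ x ∈ V, ∃ y ∈ V, ⁅x, y⁆ ≠ 0) :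
    ∃ i : ℕ, 2 ≤ i ∧ i ≤ n + 1 ∧
      ∃ t₁ ∈ Submodule.span ℝ
          (e '' {j : Fin (n + 2) | 1 ≤ (j : ℕ) ∧ (j : ℕ) + 2 ≤ i}),
        V.toSubmodule =
          Submodule.span ℝ
            (insert (e 0 + t₁) (e '' {j : Fin (n + 2) | i ≤ (j : ℕ) + 1})) := by
  classical
  have hspan' : ⊤ ≤ Submodule.span ℝ (Set.range e) := hspan.ge
  set B : Module.Basis (Fin (n+2)) ℝ L := Module.Basis.mk hindep hspan' with hBdef
  have hB : ∀ j, B j = e j := fun j => Module.Basis.mk_apply hindep hspan' j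
  -- repr of basis vectors
  have hre : ∀ m i : Fin (n+2), B.repr (e m) i = if m = i then 1 else 0 := by
    intro m i
    rw [← hB, B.repr_self, Finsupp.single_apply]
  -- sum_repr
  have hsum : ∀ x : L, ∑ j : Fin (n+2), B.repr x j • e j = x := by
    intro x
    have := B.sum_repr x
    simpa [hB] using this
  -- bilinear expansion
  have hbil : ∀ x y : L, ⁅x, y⁆ =
      ∑ j : Fin (n+2), ∑ m : Fin (n+2), (B.repr x j * B.repr y m) • ⁅e j, e m⁆ := by
    intro x y
    have adsum : ∀ (z : L) (f : Fin (n+2) → L), ⁅z, ∑ j, f j⁆ = ∑ j, ⁅z, f j⁆ := by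
      intro z f
      exact map_sum (LieAlgebra.ad ℝ L z) f Finset.univ
    have sumad : ∀ (f : Fin (n+2) → L) (z : L), ⁅∑ j, f j, z⁆ = ∑ j, ⁅f j, z⁆ := by
      intro f z
      rw [← lie_skew, adsum z f, ← Finset.sum_neg_distrib]
      exact Finset.sum_congr rfl fun j _ => (lie_skew (f j) z).symm ▸ rfl
    conv_lhs => rw [← hsum x, ← hsum y]
    rw [sumad]
    refine Finset.sum_congr rfl fun j _ => ?_
    rw [adsum]
    refine Finset.sum_congr rfl fun m _ => ?_
    rw [smul_lie, lie_smul, smul_smul]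
  -- abelian part
  have habA : ∀ x y : L, B.repr x 0 = 0 → B.repr y 0 = 0 → ⁅x, y⁆ = 0 := by
    intro x y hx hy
    rw [hbil]
    refine Finset.sum_eq_zero fun j _ => Finset.sum_eq_zero fun m _ => ?_
    rcases eq_or_ne (j : ℕ) 0 with hj | hj
    · have : j = 0 := Fin.ext hj
      rw [this, hx, zero_mul, zero_smul]
    rcases eq_or_ne (m : ℕ) 0 with hm | hm
    · have : m = 0 := Fin.ext hm
      rw [this, hy, mul_zero, zero_smul]
    rw [hzero j m hj hm, smul_zero]
  -- key bracket formula
  have hkey : ∀ x y : L, ⁅x, y⁆ = B.repr x 0 • ⁅e 0, y⁆ - B.repr y 0 • ⁅e 0, x⁆ := by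
    intro x y
    set a := B.repr x 0
    set b := B.repr y 0
    have hx' : B.repr (x - a • e 0) 0 = 0 := by
      simp [map_sub, map_smul, hre, a]
    have hy' : B.repr (y - b • e 0) 0 = 0 := by
      simp [map_sub, map_smul, hre, b]
    have h0 : ⁅x - a • e 0, y - b • e 0⁆ = 0 := habA _ _ hx' hy'
    have hexp : ⁅x - a • e 0, y - b • e 0⁆ =
        ⁅x, y⁆ - b • ⁅x, e 0⁆ - a • ⁅e 0, y⁆ + (a * b) • ⁅e 0, e 0⁆ := by
      simp only [sub_lie, lie_sub, smul_lie, lie_smul, smul_smul]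
      abel_nf
      module
    rw [hexp, lie_self, smul_zero, add_zero] at h0
    have hx0 : ⁅x, e 0⁆ = -⁅e 0, x⁆ := by rw [← lie_skew]
    have h1 : ⁅x, y⁆ = b • ⁅x, e 0⁆ + a • ⁅e 0, y⁆ := by
      rw [sub_sub, sub_eq_zero] at h0
      exact h0
    rw [h1, hx0, smul_neg]
    abel
  -- coordinates of the bracket with e 0
  have hD : ∀ (x : L) (i : Fin (n+2)), B.repr ⁅e 0, x⁆ i =
      if h : 2 ≤ (i : ℕ) then ((n + 2 - (i : ℕ) : ℕ) : ℝ) * B.repr x ⟨(i : ℕ) - 1, by omega⟩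
      else 0 := by
    intro x i
    have hx : ⁅e 0, x⁆ = ∑ j : Fin (n+2), B.repr x j • ⁅e 0, e j⁆ := by
      conv_lhs => rw [← hsum x]
      rw [show ⁅e 0, ∑ j : Fin (n+2), B.repr x j • e j⁆
            = ∑ j : Fin (n+2), ⁅e 0, B.repr x j • e j⁆ from
          map_sum (LieAlgebra.ad ℝ L (e 0)) _ Finset.univ]
      exact Finset.sum_congr rfl fun j _ => lie_smul _ _ _
    rw [hx, map_sum, Finsupp.finset_sum_apply]
    have hterm : ∀ j : Fin (n+2), B.repr (B.repr x j • ⁅e 0, e j⁆) i =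
        if hj : 1 ≤ (j : ℕ) ∧ (j : ℕ) ≤ n then
          B.repr x j * (((n + 1 - (j : ℕ) : ℕ) : ℝ) * (if (⟨(j : ℕ) + 1, by omega⟩ : Fin (n+2)) = i then 1 else 0))
        else 0 := by
      intro j
      by_cases hj : 1 ≤ (j : ℕ) ∧ (j : ℕ) ≤ n
      · rw [dif_pos hj, hbr j hj.1 hj.2]
        simp [map_smul, hre, mul_assoc]
      · rw [dif_neg hj]
        have : ⁅e 0, e j⁆ = 0 := by
          rcases Nat.lt_or_ge (j : ℕ) 1 with h | h
          · have : j = 0 := by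
              apply Fin.ext
              simp only [Fin.val_zero]
              omega
            rw [this]; exact lie_self _
          · have hj' : (j : ℕ) = n + 1 := by omega
            have : j = ⟨n + 1, by omega⟩ := Fin.ext hj'
            rw [this]; exact hlast
        rw [this, smul_zero, map_zero]
        rfl
    rw [Finset.sum_congr rfl fun j _ => hterm j]
    by_cases hi : 2 ≤ (i : ℕ)
    · rw [dif_pos hi]
      rw [Finset.sum_eq_single (⟨(i : ℕ) - 1, by omega⟩ : Fin (n+2))]
      · have hcond : 1 ≤ ((⟨(i : ℕ) - 1, by omega⟩ : Fin (n+2)) : ℕ) ∧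
            ((⟨(i : ℕ) - 1, by omega⟩ : Fin (n+2)) : ℕ) ≤ n := by
          have hilt := i.isLt
          constructor <;> (simp only [Fin.val_mk]; omega)
        rw [dif_pos hcond]
        have heq : (⟨((⟨(i : ℕ) - 1, by omega⟩ : Fin (n+2)) : ℕ) + 1, by omega⟩ : Fin (n+2)) = i := by
          have hilt := i.isLt
          apply Fin.ext
          simp only [Fin.val_mk]
          omega
        rw [if_pos heq]
        have : (n + 1 - ((⟨(i : ℕ) - 1, by omega⟩ : Fin (n+2)) : ℕ)) = n + 2 - (i : ℕ) := by
          have hilt := i.isLt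
          simp only [Fin.val_mk]
          omega
        rw [this, mul_one]
        ring
      · intro j _ hjne
        by_cases hj : 1 ≤ (j : ℕ) ∧ (j : ℕ) ≤ n
        · rw [dif_pos hj]
          have : (⟨(j : ℕ) + 1, by omega⟩ : Fin (n+2)) ≠ i := by
            intro hc
            apply hjne
            apply Fin.ext
            have := congrArg (Fin.val) hc
            simp at this
            simp
            omega
          rw [if_neg this, mul_zero, mul_zero]
        · rw [dif_neg hj]
      · intro hmem
        exact absurd (Finset.mem_univ _) hmem
    · rw [dif_neg hi]
      refine Finset.sum_eq_zero fun j _ => ?_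
      by_cases hj : 1 ≤ (j : ℕ) ∧ (j : ℕ) ≤ n
      · rw [dif_pos hj]
        have : (⟨(j : ℕ) + 1, by omega⟩ : Fin (n+2)) ≠ i := by
          intro hc
          have := congrArg (Fin.val) hc
          simp at this
          omega
        rw [if_neg this, mul_zero, mul_zero]
      · rw [dif_neg hj]
  -- tail span characterization
  have memT : ∀ (m : ℕ) (z : L), (∀ j : Fin (n+2), (j : ℕ) < m → B.repr z j = 0) →
      z ∈ Submodule.span ℝ (e '' {j : Fin (n+2) | m ≤ (j : ℕ)}) := by
    intro m z hz
    rw [← hsum z]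
    refine Submodule.sum_mem _ fun j _ => ?_
    rcases Nat.lt_or_ge (j : ℕ) m with h | h
    · rw [hz j h, zero_smul]; exact Submodule.zero_mem _
    · exact Submodule.smul_mem _ _ (Submodule.subset_span ⟨j, h, rfl⟩)
  -- find x₀ with first coordinate 1
  obtain ⟨X, hX, Y, hY, hXY⟩ := hV
  have hz0 : ∃ z ∈ V, B.repr z 0 ≠ 0 := by
    by_contra hcon
    push_neg at hcon
    rw [hkey X Y, hcon X hX, hcon Y hY, zero_smul, zero_smul, sub_zero] at hXY
    exact hXY rfl
  obtain ⟨z, hzV, hz⟩ := hz0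
  set x₀ : L := (B.repr z 0)⁻¹ • z with hx₀def
  have hx₀V : x₀ ∈ V := V.smul_mem _ hzV
  have hx₀0 : B.repr x₀ 0 = 1 := by
    rw [hx₀def, map_smul]
    exact inv_mul_cancel₀ hz
  set u : L := x₀ - e 0 with hudef
  have hu0 : B.repr u 0 = 0 := by
    rw [hudef, map_sub]
    simp [hx₀0, hre]
  have he0u : e 0 + u = x₀ := by rw [hudef]; abel
  -- the subspace W = V ∩ (span of e 1, ..., e (n+1))
  set W : Submodule ℝ L := V.toSubmodule ⊓ LinearMap.ker (B.coord 0) with hWdef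
  have hWmem : ∀ w : L, w ∈ W ↔ w ∈ V ∧ B.repr w 0 = 0 := by
    intro w
    simp [hWdef, Module.Basis.coord_apply]
  have hWV : ∀ w ∈ W, w ∈ V := fun w hw => ((hWmem w).mp hw).1
  have hbr0 : ∀ w : L, B.repr ⁅e 0, w⁆ 0 = 0 := fun w => by rw [hD]; simp
  have hliex₀ : ∀ w ∈ W, ⁅x₀, w⁆ = ⁅e 0, w⁆ := by
    intro w hw
    rw [← he0u, add_lie, habA u w hu0 ((hWmem w).mp hw).2, add_zero]
  have hWinv : ∀ w ∈ W, ⁅e 0, w⁆ ∈ W := by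
    intro w hw
    rw [hWmem]
    refine ⟨?_, hbr0 w⟩
    rw [← hliex₀ w hw]
    exact V.lie_mem hx₀V (hWV w hw)
  have hdecomp : ∀ v ∈ V, v - B.repr v 0 • x₀ ∈ W := by
    intro v hv
    rw [hWmem]
    constructor
    · exact sub_mem hv (V.smul_mem _ hx₀V)
    · rw [map_sub, map_smul]
      simp [hx₀0]
  -- there is w ∈ W with nonzero bracket with e 0
  have hWne : ∃ w ∈ W, ⁅e 0, w⁆ ≠ 0 := by
    by_contra hcon
    push_neg at hcon
    apply hXY
    have hlx : ∀ w ∈ W, ⁅x₀, w⁆ = 0 := fun w hw => by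
      rw [hliex₀ w hw]; exact hcon w hw
    set a := B.repr X 0 with hadef
    set b := B.repr Y 0 with hbdef
    obtain ⟨wX, hwXW, hwXeq⟩ : ∃ w, w ∈ W ∧ X = a • x₀ + w :=
      ⟨X - a • x₀, hdecomp X hX, by abel⟩
    obtain ⟨wY, hwYW, hwYeq⟩ : ∃ w, w ∈ W ∧ Y = b • x₀ + w :=
      ⟨Y - b • x₀, hdecomp Y hY, by abel⟩
    have h1 : ⁅x₀, wY⁆ = 0 := hlx _ hwYW
    have h2 : ⁅x₀, wX⁆ = 0 := hlx _ hwXW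
    have h3 : ⁅wX, wY⁆ = 0 :=
      habA _ _ ((hWmem _).mp hwXW).2 ((hWmem _).mp hwYW).2
    have h4 : ⁅wX, x₀⁆ = 0 := by rw [← lie_skew, h2, neg_zero]
    rw [hwXeq, hwYeq]
    simp [add_lie, lie_add, smul_lie, lie_smul, h1, h3, h4]
  obtain ⟨w₀, hw₀W, hw₀D⟩ := hWne
  -- minimal coordinate index of W
  have hExists : ∃ m : ℕ, ∃ j : Fin (n+2), (j : ℕ) = m ∧ ∃ w ∈ W, B.repr w j ≠ 0 := by
    have hw₀ne : w₀ ≠ 0 := fun h => hw₀D (by rw [h, lie_zero])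
    have hj : ∃ j : Fin (n+2), B.repr w₀ j ≠ 0 := by
      by_contra hcon
      push_neg at hcon
      apply hw₀ne
      rw [← hsum w₀]
      exact Finset.sum_eq_zero fun j _ => by rw [hcon j, zero_smul]
    obtain ⟨j, hj⟩ := hj
    exact ⟨j, j, rfl, w₀, hw₀W, hj⟩
  obtain ⟨k, hkdef⟩ : ∃ k : ℕ, k = Nat.find hExists := ⟨_, rfl⟩
  obtain ⟨jk, hjk, wk, hwkW, hwk⟩ := Nat.find_spec hExists
  rw [← hkdef] at hjk
  have hmin : ∀ w ∈ W, ∀ j : Fin (n+2), (j : ℕ) < k → B.repr w j = 0 := by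
    intro w hw j hj
    by_contra hc
    rw [hkdef] at hj
    exact Nat.find_min hExists hj ⟨j, rfl, w, hw, hc⟩
  have hkle : k ≤ n + 1 := by
    have := jk.isLt
    omega
  have hk1 : 1 ≤ k := by
    by_contra h
    have hjk0 : jk = 0 := by
      apply Fin.ext
      rw [Fin.val_zero]
      omega
    rw [hjk0] at hwk
    exact hwk ((hWmem wk).mp hwkW).2
  -- downward induction: from a minimal element, the whole tail lies in W
  have tail : ∀ d : ℕ, ∀ m : ℕ, ∀ _hm : m + d = n + 1, ∀ _hm1 : 1 ≤ m,
      ∀ w, w ∈ W → (∀ j : Fin (n+2), (j : ℕ) < m → B.repr w j = 0) →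
      B.repr w ⟨m, by omega⟩ ≠ 0 → ∀ j : Fin (n+2), m ≤ (j : ℕ) → e j ∈ W := by
    intro d
    induction d with
    | zero =>
      intro m hm hm1 w hwW hlow hlead j hj
      have hm' : m = n + 1 := by omega
      subst hm'
      have hlead' : B.repr w (⟨n+1, by omega⟩ : Fin (n+2)) ≠ 0 := hlead
      obtain ⟨cw, hcw, hw⟩ : ∃ c : ℝ, c ≠ 0 ∧ w = c • e ⟨n+1, by omega⟩ := by
        refine ⟨B.repr w ⟨n+1, by omega⟩, hlead', ?_⟩
        conv_lhs => rw [← hsum w]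
        rw [Finset.sum_eq_single (⟨n+1, by omega⟩ : Fin (n+2))]
        · intro b _ hb
          have hbv : (b : ℕ) < n + 1 := by
            have h1 := b.isLt
            have h2 : (b : ℕ) ≠ n + 1 := fun hc => hb (Fin.ext hc)
            omega
          rw [hlow b hbv, zero_smul]
        · intro h; exact absurd (Finset.mem_univ _) h
      have hje : j = ⟨n+1, by omega⟩ := by
        apply Fin.ext
        have := j.isLt
        simp only [Fin.val_mk]
        omega
      rw [hje]
      have hee : e ⟨n+1, by omega⟩ = cw⁻¹ • w := by
        rw [hw, smul_smul, inv_mul_cancel₀ hcw, one_smul]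
      rw [hee]
      exact W.smul_mem _ hwW
    | succ d ih =>
      intro m hm hm1 w hwW hlow hlead0
      have hlead : B.repr w (⟨m, by omega⟩ : Fin (n+2)) ≠ 0 := hlead0
      have hmn : m ≤ n := by omega
      have hw'W : ⁅e 0, w⁆ ∈ W := hWinv w hwW
      have hlow' : ∀ j : Fin (n+2), (j : ℕ) < m + 1 → B.repr ⁅e 0, w⁆ j = 0 := by
        intro j hj
        rw [hD]
        by_cases h2 : 2 ≤ (j : ℕ)
        · rw [dif_pos h2]
          rw [hlow ⟨(j : ℕ) - 1, by omega⟩ (by simp only [Fin.val_mk]; omega), mul_zero]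
        · rw [dif_neg h2]
      have hlead' : B.repr ⁅e 0, w⁆ ⟨m+1, by omega⟩ ≠ 0 := by
        rw [hD]
        rw [dif_pos (by simp only [Fin.val_mk]; omega)]
        intro hc
        rcases mul_eq_zero.mp hc with h | h
        · have h0 : (n + 2 - ((⟨m+1, by omega⟩ : Fin (n+2)) : ℕ)) ≠ 0 := by
            simp only [Fin.val_mk]; omega
          exact h0 (Nat.cast_eq_zero.mp h)
        · apply hlead
          have hidx : (⟨((⟨m+1, by omega⟩ : Fin (n+2)) : ℕ) - 1, by omega⟩ : Fin (n+2))
              = ⟨m, by omega⟩ := by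
            apply Fin.ext
            simp only [Fin.val_mk]
            omega
          rw [hidx] at h
          exact h
      have hge := ih (m+1) (by omega) (by omega) ⁅e 0, w⁆ hw'W hlow' hlead'
      intro j hj
      rcases Nat.lt_or_ge (j : ℕ) (m+1) with hjm | hjm
      · have hjeq : j = ⟨m, by omega⟩ := Fin.ext (by simp only [Fin.val_mk]; omega)
        have htot := Finset.add_sum_erase Finset.univ
          (fun j' : Fin (n+2) => B.repr w j' • e j') (Finset.mem_univ (⟨m, by omega⟩ : Fin (n+2)))
        rw [hsum w] at htot
        have herase : (∑ j' ∈ Finset.univ.erase (⟨m, by omega⟩ : Fin (n+2)),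
            B.repr w j' • e j') ∈ W := by
          refine Submodule.sum_mem _ fun j' hj' => ?_
          have hne := Finset.ne_of_mem_erase hj'
          rcases Nat.lt_or_ge (j' : ℕ) (m+1) with h | h
          · have hlt : (j' : ℕ) < m := by
              have hne' : (j' : ℕ) ≠ m := fun hc => hne (Fin.ext hc)
              omega
            rw [hlow j' hlt, zero_smul]
            exact W.zero_mem
          · exact W.smul_mem _ (hge j' h)
        have hem : B.repr w ⟨m, by omega⟩ • e ⟨m, by omega⟩ ∈ W := by
          have h2 : B.repr w ⟨m, by omega⟩ • e ⟨m, by omega⟩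
              = w - ∑ j' ∈ Finset.univ.erase (⟨m, by omega⟩ : Fin (n+2)),
                  B.repr w j' • e j' := by
            rw [eq_sub_iff_add_eq]
            exact htot
          rw [h2]
          exact sub_mem hwW herase
        have hee : e ⟨m, by omega⟩
            = (B.repr w ⟨m, by omega⟩)⁻¹ • (B.repr w ⟨m, by omega⟩ • e ⟨m, by omega⟩) := by
          rw [smul_smul, inv_mul_cancel₀ hlead, one_smul]
        rw [hjeq, hee]
        exact W.smul_mem _ hem
      · exact hge j hjm
  -- apply at k
  have hjkk : jk = ⟨k, by omega⟩ := Fin.ext (by simp only [Fin.val_mk]; omega)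
  have hTk : ∀ j : Fin (n+2), k ≤ (j : ℕ) → e j ∈ W := by
    refine tail (n + 1 - k) k (by omega) hk1 wk hwkW (fun j hj => hmin wk hwkW j hj) ?_
    rw [← hjkk]
    exact hwk
  -- k ≤ n
  have hkn : k ≤ n := by
    by_contra hc
    have hk : k = n + 1 := by omega
    apply hw₀D
    have hw₀eq : w₀ = B.repr w₀ ⟨n+1, by omega⟩ • e ⟨n+1, by omega⟩ := by
      conv_lhs => rw [← hsum w₀]
      rw [Finset.sum_eq_single (⟨n+1, by omega⟩ : Fin (n+2))]
      · intro b _ hb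
        have hbv : (b : ℕ) < k := by
          have h1 := b.isLt
          have h2 : (b : ℕ) ≠ n + 1 := fun hcc => hb (Fin.ext hcc)
          omega
        rw [hmin w₀ hw₀W b hbv, zero_smul]
      · intro h; exact absurd (Finset.mem_univ _) h
    calc ⁅e 0, w₀⁆ = B.repr w₀ ⟨n+1, by omega⟩ • ⁅e 0, e ⟨n+1, by omega⟩⁆ := by
          conv_lhs => rw [hw₀eq]
          rw [lie_smul]
      _ = 0 := by rw [hlast, smul_zero]
  -- assemble the answer
  refine ⟨k + 1, by omega, by omega, ?_⟩
  set t₁ := ∑ j ∈ Finset.univ.filter (fun j : Fin (n+2) => 1 ≤ (j : ℕ) ∧ (j : ℕ) < k),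
      B.repr u j • e j with ht₁def
  have ht₁mem : t₁ ∈ Submodule.span ℝ
      (e '' {j : Fin (n+2) | 1 ≤ (j : ℕ) ∧ (j : ℕ) + 2 ≤ k + 1}) := by
    refine Submodule.sum_mem _ fun j hj => ?_
    rw [Finset.mem_filter] at hj
    exact Submodule.smul_mem _ _ (Submodule.subset_span ⟨j, ⟨hj.2.1, by omega⟩, rfl⟩)
  refine ⟨t₁, ht₁mem, ?_⟩
  have hut : u - t₁ ∈ W := by
    have heq : u - t₁ = ∑ j ∈ Finset.univ.filter
        (fun j : Fin (n+2) => ¬(1 ≤ (j : ℕ) ∧ (j : ℕ) < k)), B.repr u j • e j := by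
      conv_lhs => rw [← hsum u,
        ← Finset.sum_filter_add_sum_filter_not Finset.univ
          (fun j : Fin (n+2) => 1 ≤ (j : ℕ) ∧ (j : ℕ) < k) (fun j => B.repr u j • e j),
        ht₁def, add_sub_cancel_left]
    rw [heq]
    refine Submodule.sum_mem _ fun j hj => ?_
    rw [Finset.mem_filter] at hj
    rcases Nat.lt_or_ge (j : ℕ) 1 with h0 | h0
    · have hj0 : j = 0 := by
        apply Fin.ext
        rw [Fin.val_zero]
        omega
      rw [hj0, hu0, zero_smul]
      exact W.zero_mem
    · have hjk' : k ≤ (j : ℕ) := by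
        have := hj.2
        omega
      exact W.smul_mem _ (hTk j hjk')
  have hseteq : {j : Fin (n+2) | k + 1 ≤ (j : ℕ) + 1} = {j : Fin (n+2) | k ≤ (j : ℕ)} := by
    ext j
    simp only [Set.mem_setOf_eq]
    omega
  have he0t₁V : e 0 + t₁ ∈ V := by
    have : e 0 + t₁ = x₀ - (u - t₁) := by rw [hudef]; abel
    rw [this]
    exact V.toSubmodule.sub_mem hx₀V (hWV _ hut)
  apply le_antisymm
  · intro v hv
    have hvW : v - B.repr v 0 • x₀ ∈ W := hdecomp v hv
    have hWle : ∀ w ∈ W, w ∈ Submodule.span ℝ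
        (insert (e 0 + t₁) (e '' {j : Fin (n+2) | k + 1 ≤ (j : ℕ) + 1})) := by
      intro w hw
      apply Submodule.span_mono (Set.subset_insert _ _)
      rw [hseteq]
      exact memT k w (fun j hj => hmin w hw j hj)
    have hx₀span : x₀ ∈ Submodule.span ℝ
        (insert (e 0 + t₁) (e '' {j : Fin (n+2) | k + 1 ≤ (j : ℕ) + 1})) := by
      have hx₀eq : x₀ = (e 0 + t₁) + (u - t₁) := by rw [hudef]; abel
      rw [hx₀eq]
      exact add_mem (Submodule.subset_span (Set.mem_insert _ _)) (hWle _ hut)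
    have hveq : v = B.repr v 0 • x₀ + (v - B.repr v 0 • x₀) := by abel
    rw [hveq]
    exact add_mem (Submodule.smul_mem _ _ hx₀span) (hWle _ hvW)
  · rw [Submodule.span_le]
    rintro z (rfl | ⟨j, hj, rfl⟩)
    · exact he0t₁V
    · have hjk' : k ≤ (j : ℕ) := by
        have := hj
        simp only [Set.mem_setOf_eq] at this
        omega
      exact hWV _ (hTk j hjk')
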